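/- For strictly positive probability vectors π and p and γ > 0, the γ-power cross-entropy H_γ(π,p) = -(1/γ) (∑ π_i p_i^γ) / (∑ p_i^{γ+1})^{γ/(γ+1)} satisfies H_γ(π,p) ≥ H_γ(π) where H_γ(π) = -(1/γ)(∑ π_i^{γ+1})^{1/(γ+1)}, with equality when p = π. -/

import Mathlib

open Finset

theorem gamma_power_cross_entropy_ge
    (S : ℕ) (pr p : Fin S → ℝ)
    (hpr : ∀ i, 0 < pr i) (hp : ∀ i, 0 < p i)
    (hprsum : ∑ i, pr i = 1) (hpsum : ∑ i, p i = 1)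
    (γ : ℝ) (hγ : 0 < γ) :
    -(1 / γ) * (∑ i, pr i * p i ^ γ) / (∑ i, p i ^ (γ + 1)) ^ (γ / (γ + 1)) ≥
      -(1 / γ) * (∑ i, pr i ^ (γ + 1)) ^ (1 / (γ + 1)) ∧
    (p = pr →
      -(1 / γ) * (∑ i, pr i * p i ^ γ) / (∑ i, p i ^ (γ + 1)) ^ (γ / (γ + 1)) =
        -(1 / γ) * (∑ i, pr i ^ (γ + 1)) ^ (1 / (γ + 1))) := by
  have hγ1 : (0:ℝ) < γ + 1 := by linarith
  have hS : 0 < S := by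
    by_contra h
    push_neg at h
    interval_cases S
    simp at hpsum
  have hDsum : 0 < ∑ i, p i ^ (γ + 1) :=
    Finset.sum_pos (fun i _ => Real.rpow_pos_of_pos (hp i) _) ⟨⟨0, hS⟩, mem_univ _⟩
  have hD : (0:ℝ) < (∑ i, p i ^ (γ + 1)) ^ (γ / (γ + 1)) :=
    Real.rpow_pos_of_pos hDsum _
  have hNsum : 0 < ∑ i, pr i ^ (γ + 1) :=
    Finset.sum_pos (fun i _ => Real.rpow_pos_of_pos (hpr i) _) ⟨⟨0, hS⟩, mem_univ _⟩
  constructor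
  · have hconj : Real.HolderConjugate (γ + 1) ((γ + 1) / γ) := by
      rw [Real.holderConjugate_iff]
      constructor
      · linarith
      · field_simp
        ring
    have holder := Real.inner_le_Lp_mul_Lq_of_nonneg (s := Finset.univ)
      (f := pr) (g := fun i => p i ^ γ) hconj
      (fun i _ => (hpr i).le) (fun i _ => (Real.rpow_pos_of_pos (hp i) γ).le)
    have hg : ∀ i : Fin S, (p i ^ γ) ^ ((γ + 1) / γ) = p i ^ (γ + 1) := by
      intro i
      rw [← Real.rpow_mul (hp i).le]
      congr 1
      field_simp
    have hgsum : (∑ i, (p i ^ γ) ^ ((γ + 1) / γ)) = ∑ i, p i ^ (γ + 1) :=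
      Finset.sum_congr rfl fun i _ => hg i
    rw [hgsum] at holder
    have hinv : 1 / ((γ + 1) / γ) = γ / (γ + 1) := by
      rw [one_div_div]
    rw [hinv] at holder
    have key : (∑ i, pr i * p i ^ γ) / (∑ i, p i ^ (γ + 1)) ^ (γ / (γ + 1)) ≤
        (∑ i, pr i ^ (γ + 1)) ^ (1 / (γ + 1)) := by
      rw [div_le_iff₀ hD]
      exact holder
    have hneg : (0:ℝ) ≤ 1 / γ := by positivity
    calc -(1 / γ) * (∑ i, pr i * p i ^ γ) / (∑ i, p i ^ (γ + 1)) ^ (γ / (γ + 1))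
        = -(1 / γ) * ((∑ i, pr i * p i ^ γ) / (∑ i, p i ^ (γ + 1)) ^ (γ / (γ + 1))) := by
          ring
      _ ≥ -(1 / γ) * (∑ i, pr i ^ (γ + 1)) ^ (1 / (γ + 1)) := by
          rw [ge_iff_le, neg_mul, neg_mul, neg_le_neg_iff]
          exact mul_le_mul_of_nonneg_left key hneg
  · intro hpe
    subst hpe
    have hnum : (∑ i, p i * p i ^ γ) = ∑ i, p i ^ (γ + 1) := by
      refine Finset.sum_congr rfl fun i _ => ?_
      rw [add_comm, Real.rpow_add (hp i), Real.rpow_one]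
    have h1 : (1:ℝ) / (γ + 1) = 1 - γ / (γ + 1) := by field_simp; ring
    rw [hnum, mul_div_assoc, h1, Real.rpow_sub hDsum, Real.rpow_one]
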